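/- Sharper discrete energy estimate: under the hypotheses of the discrete energy dissipation theorem, (Eⁿ⁺¹ − Eⁿ)/Δx ≤ −Δt·∑_{i=1}^{N−1} min(M(φⁿ⁺¹ᵢ,φⁿ⁺¹ᵢ₊₁), M(φⁿ⁺¹ᵢ₊₁,φⁿ⁺¹ᵢ))·|V_{i+1/2}|². -/

import Mathlib

set_option maxHeartbeats 1000000


noncomputable def upwindMob (k : ℕ) (a b : ℝ) : ℝ :=
  (max (1 + a) 0 * max (1 - b) 0) ^ k

noncomputable def discreteEnergy (N : ℕ) (Δx ε : ℝ) (F : ℝ → ℝ) (ψ : ℕ → ℝ) : ℝ :=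
  Δx * ∑ i ∈ Finset.Icc 1 (N - 1), (ε ^ 2 / 2) * ((ψ (i + 1) - ψ i) / Δx) ^ 2
    + Δx * ∑ i ∈ Finset.Icc 1 N, F (ψ i)

lemma upwindMob_nonneg (k : ℕ) (a b : ℝ) : 0 ≤ upwindMob k a b :=
  pow_nonneg (mul_nonneg (le_max_right _ 0) (le_max_right _ 0)) k

lemma peel_bot (f : ℕ → ℝ) (M : ℕ) :
    ∑ i ∈ Finset.Icc 1 (M + 1), f i = f 1 + ∑ i ∈ Finset.Icc 2 (M + 1), f i := by
  have h : Finset.Icc 1 (M + 1) = insert 1 (Finset.Icc 2 (M + 1)) := by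
    ext x; simp [Finset.mem_Icc]; omega
  rw [h, Finset.sum_insert (by simp [Finset.mem_Icc])]

lemma abel1 (M : ℕ) (a d : ℕ → ℝ) :
    ∑ i ∈ Finset.Icc 1 (M + 1), a i * (d (i + 1) - d i)
      = a (M + 1) * d (M + 2) - a 1 * d 1
        - ∑ i ∈ Finset.Icc 2 (M + 1), (a i - a (i - 1)) * d i := by
  induction M with
  | zero => simp; ring
  | succ n ih =>
    rw [Finset.sum_Icc_succ_top (by omega : 1 ≤ n + 1 + 1), ih,
      Finset.sum_Icc_succ_top (by omega : 2 ≤ n + 1 + 1)]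
    simp only [Nat.add_sub_cancel]
    ring

lemma abel2 (N : ℕ) (m J : ℕ → ℝ) :
    ∑ i ∈ Finset.Icc 1 (N + 1), m i * (J i - J (i - 1))
      = m (N + 1) * J (N + 1) - m 1 * J 0
        - ∑ i ∈ Finset.Icc 1 N, (m (i + 1) - m i) * J i := by
  induction N with
  | zero => simp; ring
  | succ n ih =>
    rw [Finset.sum_Icc_succ_top (by omega : 1 ≤ n + 1 + 1), ih,
      Finset.sum_Icc_succ_top (by omega : 1 ≤ n + 1)]
    simp only [Nat.add_sub_cancel]
    ring

theorem upwind_sav_sharper_energy_estimate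
    (N k : ℕ) (hN : 2 ≤ N) (hk : 1 ≤ k)
    (Δt Δx ε : ℝ) (hΔt : 0 < Δt) (hΔx : 0 < Δx) (hε : 0 < ε)
    (F F' : ℝ → ℝ) (hF : ∀ x, HasDerivAt F (F' x) x)
    (φn φn1 μ V J lap : ℕ → ℝ) (ξ : ℝ)
    (hlapI : ∀ i, 2 ≤ i → i ≤ N - 1 →
      lap i = (φn1 (i + 1) - 2 * φn1 i + φn1 (i - 1)) / Δx ^ 2)
    (hlap1 : lap 1 = (φn1 2 - φn1 1) / Δx ^ 2)
    (hlapN : lap N = (φn1 (N - 1) - φn1 N) / Δx ^ 2)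
    (hμ : ∀ i, 1 ≤ i → i ≤ N → μ i = -ε ^ 2 * lap i + ξ * F' (φn1 i))
    (hV : ∀ i, 1 ≤ i → i ≤ N - 1 → V i = -(μ (i + 1) - μ i) / Δx)
    (hJ0 : J 0 = 0) (hJN : J N = 0)
    (hJ : ∀ i, 1 ≤ i → i ≤ N - 1 →
      J i = max (V i) 0 * upwindMob k (φn1 i) (φn1 (i + 1))
            + min (V i) 0 * upwindMob k (φn1 (i + 1)) (φn1 i))
    (hupd : ∀ i, 1 ≤ i → i ≤ N → φn1 i - φn i = -(Δt / Δx) * (J i - J (i - 1)))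
    (hSAV : ∑ i ∈ Finset.Icc 1 N, (F (φn1 i) - F (φn i))
      = ξ * ∑ i ∈ Finset.Icc 1 N, F' (φn1 i) * (φn1 i - φn i)) :
    (discreteEnergy N Δx ε F φn1 - discreteEnergy N Δx ε F φn) / Δx
      ≤ -Δt * ∑ i ∈ Finset.Icc 1 (N - 1),
          min (upwindMob k (φn1 i) (φn1 (i + 1))) (upwindMob k (φn1 (i + 1)) (φn1 i))
            * (V i) ^ 2 := by
  obtain ⟨M, rfl⟩ : ∃ M, N = M + 2 := ⟨N - 2, by omega⟩
  have hM1 : M + 2 - 1 = M + 1 := rfl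
  simp only [hM1] at hlapI hlapN hV hJ ⊢
  have hΔx' : Δx ≠ 0 := ne_of_gt hΔx
  set d : ℕ → ℝ := fun i => φn1 i - φn i with hd
  set a : ℕ → ℝ := fun i => φn1 (i + 1) - φn1 i with ha
  -- Step A: energy difference
  have hE : (discreteEnergy (M + 2) Δx ε F φn1 - discreteEnergy (M + 2) Δx ε F φn) / Δx
      = ∑ i ∈ Finset.Icc 1 (M + 1),
          ((ε ^ 2 / 2) * ((φn1 (i + 1) - φn1 i) / Δx) ^ 2
            - (ε ^ 2 / 2) * ((φn (i + 1) - φn i) / Δx) ^ 2)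
        + ∑ i ∈ Finset.Icc 1 (M + 2), (F (φn1 i) - F (φn i)) := by
    unfold discreteEnergy
    simp only [hM1]
    rw [Finset.sum_sub_distrib, Finset.sum_sub_distrib]
    field_simp
    ring
  -- Step B: gradient bound
  have hgrad : ∑ i ∈ Finset.Icc 1 (M + 1),
        ((ε ^ 2 / 2) * ((φn1 (i + 1) - φn1 i) / Δx) ^ 2
          - (ε ^ 2 / 2) * ((φn (i + 1) - φn i) / Δx) ^ 2)
      ≤ ∑ i ∈ Finset.Icc 1 (M + 1), (ε ^ 2 / Δx ^ 2) * (a i * (d (i + 1) - d i)) := by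
    apply Finset.sum_le_sum
    intro i _
    have h2 : d (i + 1) - d i = (φn1 (i + 1) - φn1 i) - (φn (i + 1) - φn i) := by
      simp only [hd]; ring
    rw [h2]
    have key : (ε ^ 2 / Δx ^ 2) * (a i * ((φn1 (i + 1) - φn1 i) - (φn (i + 1) - φn i)))
        - ((ε ^ 2 / 2) * ((φn1 (i + 1) - φn1 i) / Δx) ^ 2
          - (ε ^ 2 / 2) * ((φn (i + 1) - φn i) / Δx) ^ 2)
        = (ε ^ 2 / (2 * Δx ^ 2)) * ((φn1 (i + 1) - φn1 i) - (φn (i + 1) - φn i)) ^ 2 := by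
      simp only [ha]; field_simp; ring
    nlinarith [mul_nonneg (le_of_lt (div_pos (pow_pos hε 2) (by positivity : (0:ℝ) < 2 * Δx ^ 2)))
      (sq_nonneg ((φn1 (i + 1) - φn1 i) - (φn (i + 1) - φn i)))]
  -- Step C: summation by parts for the gradient term
  have habel1 : ∑ i ∈ Finset.Icc 1 (M + 1), (ε ^ 2 / Δx ^ 2) * (a i * (d (i + 1) - d i))
      = ∑ i ∈ Finset.Icc 1 (M + 2), (-ε ^ 2 * lap i) * d i := by
    rw [← Finset.mul_sum, abel1 M a d,
      Finset.sum_Icc_succ_top (by omega : 1 ≤ M + 2), peel_bot]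
    rw [hlap1, hlapN]
    have hmid : ∑ i ∈ Finset.Icc 2 (M + 1), (-ε ^ 2 * lap i) * d i
        = -(ε ^ 2 / Δx ^ 2) * ∑ i ∈ Finset.Icc 2 (M + 1), (a i - a (i - 1)) * d i := by
      rw [Finset.mul_sum]
      apply Finset.sum_congr rfl
      intro i hi
      rw [Finset.mem_Icc] at hi
      rw [hlapI i hi.1 (by omega)]
      have h3 : i - 1 + 1 = i := by omega
      simp only [ha, h3]
      field_simp
      ring
    rw [hmid]
    field_simp
    ring
  -- Step D: combine with SAV into μ
  have hsum : ∑ i ∈ Finset.Icc 1 (M + 2), (-ε ^ 2 * lap i) * d i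
        + ξ * ∑ i ∈ Finset.Icc 1 (M + 2), F' (φn1 i) * d i
      = ∑ i ∈ Finset.Icc 1 (M + 2), μ i * d i := by
    rw [Finset.mul_sum, ← Finset.sum_add_distrib]
    apply Finset.sum_congr rfl
    intro i hi
    rw [Finset.mem_Icc] at hi
    rw [hμ i hi.1 hi.2]
    ring
  -- Step E: flux form
  have hflux : ∑ i ∈ Finset.Icc 1 (M + 2), μ i * d i
      = -Δt * ∑ i ∈ Finset.Icc 1 (M + 1), V i * J i := by
    have h1 : ∀ i ∈ Finset.Icc 1 (M + 2),
        μ i * d i = -(Δt / Δx) * (μ i * (J i - J (i - 1))) := by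
      intro i hi
      rw [Finset.mem_Icc] at hi
      have : d i = -(Δt / Δx) * (J i - J (i - 1)) := hupd i hi.1 hi.2
      rw [this]; ring
    rw [Finset.sum_congr rfl h1, ← Finset.mul_sum, abel2 (M + 1) μ J, hJ0, hJN]
    have h2 : ∀ i ∈ Finset.Icc 1 (M + 1),
        (μ (i + 1) - μ i) * J i = -Δx * (V i * J i) := by
      intro i hi
      rw [Finset.mem_Icc] at hi
      have hv := hV i hi.1 hi.2
      have : μ (i + 1) - μ i = -(Δx * V i) := by rw [hv]; field_simp
      rw [this]; ring
    rw [Finset.sum_congr rfl h2, ← Finset.mul_sum]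
    field_simp
    ring
  -- Step F: per-term lower bound on the dissipation
  have hterm : ∀ i ∈ Finset.Icc 1 (M + 1),
      min (upwindMob k (φn1 i) (φn1 (i + 1))) (upwindMob k (φn1 (i + 1)) (φn1 i)) * (V i) ^ 2
        ≤ V i * J i := by
    intro i hi
    rw [Finset.mem_Icc] at hi
    rw [hJ i hi.1 hi.2]
    set P := upwindMob k (φn1 i) (φn1 (i + 1)) with hP
    set Q := upwindMob k (φn1 (i + 1)) (φn1 i) with hQ
    have hPn : 0 ≤ P := upwindMob_nonneg _ _ _
    have hQn : 0 ≤ Q := upwindMob_nonneg _ _ _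
    rcases le_total 0 (V i) with hv | hv
    · rw [max_eq_left hv, min_eq_right hv]
      have h := mul_le_mul_of_nonneg_right (min_le_left P Q) (sq_nonneg (V i))
      have he : V i * (V i * P + 0 * Q) = P * V i ^ 2 := by ring
      linarith
    · rw [max_eq_right hv, min_eq_left hv]
      have h := mul_le_mul_of_nonneg_right (min_le_right P Q) (sq_nonneg (V i))
      have he : V i * (0 * P + V i * Q) = Q * V i ^ 2 := by ring
      linarith
  calc (discreteEnergy (M + 2) Δx ε F φn1 - discreteEnergy (M + 2) Δx ε F φn) / Δx
      = ∑ i ∈ Finset.Icc 1 (M + 1),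
          ((ε ^ 2 / 2) * ((φn1 (i + 1) - φn1 i) / Δx) ^ 2
            - (ε ^ 2 / 2) * ((φn (i + 1) - φn i) / Δx) ^ 2)
        + ∑ i ∈ Finset.Icc 1 (M + 2), (F (φn1 i) - F (φn i)) := hE
    _ = ∑ i ∈ Finset.Icc 1 (M + 1),
          ((ε ^ 2 / 2) * ((φn1 (i + 1) - φn1 i) / Δx) ^ 2
            - (ε ^ 2 / 2) * ((φn (i + 1) - φn i) / Δx) ^ 2)
        + ξ * ∑ i ∈ Finset.Icc 1 (M + 2), F' (φn1 i) * d i := by rw [hSAV]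
    _ ≤ ∑ i ∈ Finset.Icc 1 (M + 1), (ε ^ 2 / Δx ^ 2) * (a i * (d (i + 1) - d i))
        + ξ * ∑ i ∈ Finset.Icc 1 (M + 2), F' (φn1 i) * d i := by
          exact add_le_add_left hgrad _
    _ = ∑ i ∈ Finset.Icc 1 (M + 2), μ i * d i := by rw [habel1]; exact hsum
    _ = -Δt * ∑ i ∈ Finset.Icc 1 (M + 1), V i * J i := hflux
    _ ≤ -Δt * ∑ i ∈ Finset.Icc 1 (M + 1),
          min (upwindMob k (φn1 i) (φn1 (i + 1))) (upwindMob k (φn1 (i + 1)) (φn1 i))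
            * (V i) ^ 2 := by
          rw [neg_mul, neg_mul, neg_le_neg_iff]
          exact mul_le_mul_of_nonneg_left (Finset.sum_le_sum hterm) hΔt.le
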